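/- Fix 0 < α < 1 and set a_k = ∏_{i=1}^{k} (1 − (i+1)^{−α}) for k ≥ 1. Then lim_{k→∞} (log((a_k − a_{k+1})/2))/(log a_k) = 1 and lim_{k→∞} (log((a_{k−1} − a_k)/2))/(log((a_k − a_{k+1})/2)) = 1. Moreover the gap sequence {a_k − a_{k+1}}_k is decreasing. -/

import Mathlib

open Filter Topology Metric Set

/-- `a_k = ∏_{i=1}^k (1 - (i+1)^(-α))`; note `a_0 = 1` (empty product). -/
noncomputable def aSeq (α : ℝ) (k : ℕ) : ℝ :=
  ∏ i ∈ Finset.Icc 1 k, (1 - ((i : ℝ) + 1) ^ (-α))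

/-- The countable compact set `E = {0, 1, a_1, a_2, …}`. -/
noncomputable def aSet (α : ℝ) : Set ℝ :=
  insert (0 : ℝ) (insert 1 {x : ℝ | ∃ k : ℕ, 1 ≤ k ∧ x = aSeq α k})

section AGapAux

variable {α : ℝ}

lemma aGap_fac_pos (hα0 : 0 < α) {i : ℕ} (hi : 1 ≤ i) : 0 < 1 - ((i : ℝ) + 1) ^ (-α) := by
  have h1 : (1 : ℝ) < (i : ℝ) + 1 := by
    have : (1 : ℝ) ≤ (i : ℝ) := by exact_mod_cast hi
    linarith
  have := Real.rpow_lt_one_of_one_lt_of_neg h1 (neg_neg_of_pos hα0)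
  linarith

lemma aGap_fac_lt_one (hα0 : 0 < α) {i : ℕ} : 1 - ((i : ℝ) + 1) ^ (-α) < 1 := by
  have : (0 : ℝ) < ((i : ℝ) + 1) ^ (-α) := Real.rpow_pos_of_pos (by positivity) _
  linarith

lemma aSeq_pos (hα0 : 0 < α) (k : ℕ) : 0 < aSeq α k :=
  Finset.prod_pos fun i hi => aGap_fac_pos hα0 (Finset.mem_Icc.1 hi).1

lemma aSeq_zero : aSeq α 0 = 1 := by
  simp [aSeq]

lemma aSeq_succ (k : ℕ) :
    aSeq α (k + 1) = aSeq α k * (1 - ((k : ℝ) + 2) ^ (-α)) := by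
  unfold aSeq
  rw [Finset.prod_Icc_succ_top (Nat.le_add_left 1 k)]
  have : ((k + 1 : ℕ) : ℝ) + 1 = (k : ℝ) + 2 := by push_cast; ring
  rw [this]

lemma aGap_eq (k : ℕ) :
    aSeq α k - aSeq α (k + 1) = aSeq α k * ((k : ℝ) + 2) ^ (-α) := by
  rw [aSeq_succ]; ring

lemma aSeq_strictAnti (hα0 : 0 < α) : StrictAnti (aSeq α) := by
  apply strictAnti_nat_of_succ_lt
  intro k
  rw [aSeq_succ]
  have h1 := aSeq_pos (α := α) hα0 k
  have h2 : (0 : ℝ) < ((k : ℝ) + 2) ^ (-α) := Real.rpow_pos_of_pos (by positivity) _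
  nlinarith

lemma aSeq_lt_one (hα0 : 0 < α) {k : ℕ} (hk : 1 ≤ k) : aSeq α k < 1 := by
  have := aSeq_strictAnti (α := α) hα0 (show 0 < k from hk)
  rwa [aSeq_zero] at this

lemma aGap_strictAnti (hα0 : 0 < α) :
    StrictAnti (fun k : ℕ => aSeq α k - aSeq α (k + 1)) := by
  apply strictAnti_nat_of_succ_lt
  intro k
  simp only [aGap_eq]
  have hc : ((k + 1 : ℕ) : ℝ) + 2 = (k : ℝ) + 3 := by push_cast; ring
  rw [hc]
  have h1 : aSeq α (k + 1) < aSeq α k := aSeq_strictAnti hα0 (lt_add_one k)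
  have h2 : ((k : ℝ) + 3) ^ (-α) < ((k : ℝ) + 2) ^ (-α) :=
    Real.rpow_lt_rpow_of_neg (by positivity) (by linarith) (neg_neg_of_pos hα0)
  exact mul_lt_mul'' h1 h2 (aSeq_pos hα0 (k + 1)).le
    (Real.rpow_pos_of_pos (by positivity) _).le

lemma aGap_pos (hα0 : 0 < α) (k : ℕ) : 0 < aSeq α k - aSeq α (k + 1) := by
  rw [aGap_eq]
  exact mul_pos (aSeq_pos hα0 k) (Real.rpow_pos_of_pos (by positivity) _)

lemma aGap_lt_one (hα0 : 0 < α) (k : ℕ) : aSeq α k - aSeq α (k + 1) < 1 := by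
  rw [aGap_eq]
  have h1 : aSeq α k ≤ 1 := by
    rcases Nat.eq_zero_or_pos k with rfl | hk
    · rw [aSeq_zero]
    · exact (aSeq_lt_one hα0 hk).le
  have h2 : ((k : ℝ) + 2) ^ (-α) < 1 := by
    have hk0 : (0 : ℝ) ≤ (k : ℝ) := Nat.cast_nonneg k
    exact Real.rpow_lt_one_of_one_lt_of_neg (by linarith) (neg_neg_of_pos hα0)
  have h3 := aSeq_pos (α := α) hα0 k
  nlinarith

lemma aLog_gap (hα0 : 0 < α) (k : ℕ) :
    Real.log ((aSeq α k - aSeq α (k + 1)) / 2) =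
      Real.log (aSeq α k) - α * Real.log ((k : ℝ) + 2) - Real.log 2 := by
  rw [aGap_eq, Real.log_div
      (mul_pos (aSeq_pos hα0 k) (Real.rpow_pos_of_pos (by positivity) _)).ne' two_ne_zero,
    Real.log_mul (aSeq_pos hα0 k).ne' (Real.rpow_pos_of_pos (by positivity) _).ne',
    Real.log_rpow (by positivity)]
  ring

lemma aLog_le (hα0 : 0 < α) (k : ℕ) :
    Real.log (aSeq α k) ≤ -∑ i ∈ Finset.Icc 1 k, ((i : ℝ) + 1) ^ (-α) := by
  unfold aSeq
  rw [Real.log_prod (fun i hi => (aGap_fac_pos hα0 (Finset.mem_Icc.1 hi).1).ne')]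
  rw [← Finset.sum_neg_distrib]
  apply Finset.sum_le_sum
  intro i hi
  have := Real.log_le_sub_one_of_pos (aGap_fac_pos hα0 (Finset.mem_Icc.1 hi).1)
  linarith

lemma aSum_lb (hα0 : 0 < α) {k : ℕ} (hk : 1 ≤ k) :
    ((k : ℝ) + 2) ^ (1 - α) ≤ 3 * ∑ i ∈ Finset.Icc 1 k, ((i : ℝ) + 1) ^ (-α) := by
  have hk1 : (1 : ℝ) ≤ (k : ℝ) := by exact_mod_cast hk
  have h1 : (k : ℝ) * ((k : ℝ) + 1) ^ (-α) ≤ ∑ i ∈ Finset.Icc 1 k, ((i : ℝ) + 1) ^ (-α) := by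
    have hb : ∀ i ∈ Finset.Icc 1 k, ((k : ℝ) + 1) ^ (-α) ≤ ((i : ℝ) + 1) ^ (-α) := by
      intro i hi
      have h2 := (Finset.mem_Icc.1 hi).2
      have : (i : ℝ) ≤ (k : ℝ) := by exact_mod_cast h2
      exact Real.rpow_le_rpow_of_nonpos (by positivity) (by linarith)
        (by linarith)
    have := Finset.card_nsmul_le_sum (Finset.Icc 1 k)
      (fun i => ((i : ℝ) + 1) ^ (-α)) (((k : ℝ) + 1) ^ (-α)) hb
    simpa [Nat.card_Icc, nsmul_eq_mul] using this
  have h2 : ((k : ℝ) + 2) ^ (-α) ≤ ((k : ℝ) + 1) ^ (-α) :=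
    Real.rpow_le_rpow_of_nonpos (by positivity) (by linarith) (by linarith)
  have h3 : ((k : ℝ) + 2) ^ (1 - α) = ((k : ℝ) + 2) * ((k : ℝ) + 2) ^ (-α) := by
    rw [show (1 - α) = 1 + (-α) by ring, Real.rpow_add (by positivity), Real.rpow_one]
  have h4 : ((k : ℝ) + 2) ≤ 3 * (k : ℝ) := by linarith
  have p1 : (0 : ℝ) < ((k : ℝ) + 2) ^ (-α) := Real.rpow_pos_of_pos (by positivity) _
  have h5 : ((k : ℝ) + 2) * ((k : ℝ) + 2) ^ (-α) ≤ 3 * (k : ℝ) * ((k : ℝ) + 1) ^ (-α) :=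
    mul_le_mul h4 h2 p1.le (by positivity)
  rw [h3]
  nlinarith

end AGapAux

/-- For `0 < α < 1` and `a_k = ∏_{i=1}^k (1 - (i+1)^(-α))`:
`lim_{k→∞} log ((a_k - a_{k+1})/2) / log a_k = 1`,
`lim_{k→∞} log ((a_{k-1} - a_k)/2) / log ((a_k - a_{k+1})/2) = 1`, and the gap sequence
`{a_k - a_{k+1}}_k` is decreasing. -/
theorem aSeq_gap_limits (α : ℝ) (hα0 : 0 < α) (hα1 : α < 1) :
    Filter.Tendsto
      (fun k : ℕ => Real.log ((aSeq α k - aSeq α (k + 1)) / 2) / Real.log (aSeq α k))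
      Filter.atTop (𝓝 1) ∧
    Filter.Tendsto
      (fun k : ℕ => Real.log ((aSeq α (k - 1) - aSeq α k) / 2) /
        Real.log ((aSeq α k - aSeq α (k + 1)) / 2))
      Filter.atTop (𝓝 1) ∧
    StrictAnti (fun k : ℕ => aSeq α k - aSeq α (k + 1)) := by
  set L : ℕ → ℝ := fun k => Real.log (aSeq α k) with hLdef
  set b : ℕ → ℝ := fun k => Real.log ((aSeq α k - aSeq α (k + 1)) / 2) with hbdef
  set S : ℕ → ℝ := fun k => ∑ i ∈ Finset.Icc 1 k, ((i : ℝ) + 1) ^ (-α) with hSdef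
  set N : ℕ → ℝ := fun k => α * Real.log ((k : ℝ) + 2) + Real.log 2 with hNdef
  have hb_eq : ∀ k, b k = L k - N k := by
    intro k
    simp only [hbdef, hNdef, hLdef, aLog_gap hα0 k]
    ring
  have htend2 : Tendsto (fun k : ℕ => (k : ℝ) + 2) atTop atTop :=
    tendsto_atTop_add_const_right atTop 2 tendsto_natCast_atTop_atTop
  -- L k < 0 eventually, and -L k ≥ S k ≥ (k+2)^(1-α)/3
  have hLneg : ∀ k : ℕ, 1 ≤ k → L k < 0 := fun k hk =>
    Real.log_neg (aSeq_pos hα0 k) (aSeq_lt_one hα0 hk)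
  have hbneg : ∀ k : ℕ, b k < 0 := by
    intro k
    apply Real.log_neg (div_pos (aGap_pos hα0 k) two_pos)
    have := aGap_lt_one hα0 k
    linarith
  have hLS : ∀ k, L k ≤ -S k := fun k => aLog_le hα0 k
  have hSpow : ∀ᶠ k : ℕ in atTop, ((k : ℝ) + 2) ^ (1 - α) ≤ 3 * S k := by
    filter_upwards [eventually_ge_atTop 1] with k hk using aSum_lb hα0 hk
  have hrpow_top : Tendsto (fun k : ℕ => ((k : ℝ) + 2) ^ (1 - α)) atTop atTop :=
    (tendsto_rpow_atTop (by linarith : (0 : ℝ) < 1 - α)).comp htend2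
  have hnegL_top : Tendsto (fun k : ℕ => -L k) atTop atTop := by
    apply tendsto_atTop_mono' _ _ (hrpow_top.atTop_div_const (by norm_num : (0:ℝ) < 3))
    filter_upwards [hSpow] with k hk
    have h1 := hLS k
    show ((k : ℝ) + 2) ^ (1 - α) / 3 ≤ -L k
    linarith
  -- N =o[atTop] (-L)
  have hNO : (fun k : ℕ => N k) =O[atTop] (fun k : ℕ => Real.log ((k : ℝ) + 2)) := by
    apply Asymptotics.IsBigO.of_bound (α + 1)
    filter_upwards with k
    have hk0 : (0 : ℝ) ≤ (k : ℝ) := Nat.cast_nonneg k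
    have hlog2 : Real.log 2 ≤ Real.log ((k : ℝ) + 2) :=
      Real.log_le_log (by norm_num) (by linarith)
    have hlogpos : (0 : ℝ) < Real.log ((k : ℝ) + 2) := by
      have : (0:ℝ) < Real.log 2 := Real.log_pos (by norm_num)
      linarith
    have hN0 : 0 ≤ N k := by
      simp only [hNdef]
      have : (0:ℝ) < Real.log 2 := Real.log_pos (by norm_num)
      nlinarith
    rw [Real.norm_eq_abs, Real.norm_eq_abs, abs_of_nonneg hN0, abs_of_pos hlogpos]
    simp only [hNdef]
    nlinarith
  have hlog_o : (fun k : ℕ => Real.log ((k : ℝ) + 2)) =o[atTop]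
      (fun k : ℕ => ((k : ℝ) + 2) ^ (1 - α)) :=
    (isLittleO_log_rpow_atTop (by linarith : (0:ℝ) < 1 - α)).comp_tendsto htend2
  have hpow_O : (fun k : ℕ => ((k : ℝ) + 2) ^ (1 - α)) =O[atTop] (fun k : ℕ => -L k) := by
    apply Asymptotics.IsBigO.of_bound 3
    filter_upwards [hSpow, eventually_ge_atTop 1] with k hk hk1
    have h1 := hLS k
    have hS0 : 0 ≤ S k := by
      apply Finset.sum_nonneg
      intro i _
      positivity
    rw [Real.norm_eq_abs, Real.norm_eq_abs, abs_of_nonneg (by positivity),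
      abs_of_nonneg (by linarith : (0:ℝ) ≤ -L k)]
    linarith
  have hc0 : Tendsto (fun k : ℕ => N k / (-L k)) atTop (𝓝 0) :=
    (hNO.trans_isLittleO (hlog_o.trans_isBigO hpow_O)).tendsto_div_nhds_zero
  -- First limit
  have hlim1 : Tendsto (fun k : ℕ => b k / L k) atTop (𝓝 1) := by
    have heq : ∀ᶠ k : ℕ in atTop, 1 + N k / (-L k) = b k / L k := by
      filter_upwards [eventually_ge_atTop 1] with k hk
      have hL := hLneg k hk
      have hL0 : L k ≠ 0 := ne_of_lt hL
      rw [hb_eq, sub_div, div_self hL0, div_neg]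
      ring
    have : Tendsto (fun k : ℕ => 1 + N k / (-L k)) atTop (𝓝 1) := by
      have hone : Tendsto (fun _ : ℕ => (1:ℝ)) atTop (𝓝 1) := tendsto_const_nhds
      simpa using hone.add hc0
    exact this.congr' heq
  -- difference b k - b (k+1) tends to 0
  have hfac2 : ∀ k : ℕ, 0 < 1 - ((k : ℝ) + 2) ^ (-α) := by
    intro k
    have hk0 : (0 : ℝ) ≤ (k : ℝ) := Nat.cast_nonneg k
    have h1 : (1 : ℝ) < (k : ℝ) + 2 := by linarith
    have := Real.rpow_lt_one_of_one_lt_of_neg h1 (neg_neg_of_pos hα0)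
    linarith
  have hL_diff : ∀ k : ℕ, L k - L (k + 1) = -Real.log (1 - ((k : ℝ) + 2) ^ (-α)) := by
    intro k
    simp only [hLdef]
    rw [aSeq_succ, Real.log_mul (aSeq_pos hα0 k).ne' (hfac2 k).ne']
    ring
  have hb_diff : ∀ k : ℕ, b k - b (k + 1) =
      -Real.log (1 - ((k : ℝ) + 2) ^ (-α)) +
        α * (Real.log ((k : ℝ) + 3) - Real.log ((k : ℝ) + 2)) := by
    intro k
    rw [hb_eq, hb_eq]
    have hc : ((k + 1 : ℕ) : ℝ) + 2 = (k : ℝ) + 3 := by push_cast; ring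
    simp only [hNdef, hc]
    have := hL_diff k
    linarith
  have hterm1 : Tendsto (fun k : ℕ => Real.log (1 - ((k : ℝ) + 2) ^ (-α))) atTop (𝓝 0) := by
    have hx : Tendsto (fun k : ℕ => ((k : ℝ) + 2) ^ (-α)) atTop (𝓝 0) :=
      (tendsto_rpow_neg_atTop hα0).comp htend2
    have h1 : Tendsto (fun k : ℕ => 1 - ((k : ℝ) + 2) ^ (-α)) atTop (𝓝 1) := by
      have hone : Tendsto (fun _ : ℕ => (1:ℝ)) atTop (𝓝 1) := tendsto_const_nhds
      simpa using hone.sub hx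
    have := (Real.continuousAt_log one_ne_zero).tendsto.comp h1
    simpa [Function.comp_def] using this
  have hterm2 : Tendsto (fun k : ℕ => Real.log ((k : ℝ) + 3) - Real.log ((k : ℝ) + 2))
      atTop (𝓝 0) := by
    have heq : ∀ k : ℕ, Real.log ((k : ℝ) + 3) - Real.log ((k : ℝ) + 2) =
        Real.log (((k : ℝ) + 3) / ((k : ℝ) + 2)) := by
      intro k
      rw [Real.log_div (by positivity) (by positivity)]
    have hq : Tendsto (fun k : ℕ => ((k : ℝ) + 3) / ((k : ℝ) + 2)) atTop (𝓝 1) := by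
      have hinv : Tendsto (fun k : ℕ => ((k : ℝ) + 2)⁻¹) atTop (𝓝 0) :=
        htend2.inv_tendsto_atTop
      have h1 : Tendsto (fun k : ℕ => 1 + ((k : ℝ) + 2)⁻¹) atTop (𝓝 1) := by
        have hone : Tendsto (fun _ : ℕ => (1:ℝ)) atTop (𝓝 1) := tendsto_const_nhds
        simpa using hone.add hinv
      apply h1.congr
      intro k
      field_simp
      ring
    have := (Real.continuousAt_log one_ne_zero).tendsto.comp hq
    simp only [Function.comp, Real.log_one] at this
    exact Tendsto.congr (fun k => (heq k).symm) this
  have hd : Tendsto (fun k : ℕ => b k - b (k + 1)) atTop (𝓝 0) := by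
    have : Tendsto (fun k : ℕ =>
        -Real.log (1 - ((k : ℝ) + 2) ^ (-α)) +
          α * (Real.log ((k : ℝ) + 3) - Real.log ((k : ℝ) + 2))) atTop (𝓝 0) := by
      have := (hterm1.neg).add (hterm2.const_mul α)
      simpa using this
    exact this.congr (fun k => (hb_diff k).symm)
  have hnb_top : Tendsto (fun k : ℕ => -b k) atTop atTop := by
    apply tendsto_atTop_mono _ hnegL_top
    intro k
    have hN0 : 0 ≤ N k := by
      simp only [hNdef]
      have h2 : (0:ℝ) ≤ Real.log 2 := (Real.log_pos (by norm_num)).le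
      have hk0 : (0 : ℝ) ≤ (k : ℝ) := Nat.cast_nonneg k
      have h3 : (0:ℝ) ≤ Real.log ((k : ℝ) + 2) :=
        Real.log_nonneg (by linarith)
      nlinarith
    have := hb_eq k
    linarith
  have hbinv : Tendsto (fun k : ℕ => (b k)⁻¹) atTop (𝓝 0) := by
    have h1 : Tendsto (fun k : ℕ => (-b k)⁻¹) atTop (𝓝 0) := hnb_top.inv_tendsto_atTop
    have h2 := h1.neg
    simp only [neg_zero] at h2
    apply h2.congr
    intro k
    show -(-b k)⁻¹ = (b k)⁻¹
    rw [inv_neg, neg_neg]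
  have he : Tendsto (fun k : ℕ => b (k - 1) - b k) atTop (𝓝 0) := by
    have h1 : Tendsto (fun k : ℕ => b (k - 1) - b (k - 1 + 1)) atTop (𝓝 0) :=
      hd.comp (tendsto_sub_atTop_nat 1)
    apply h1.congr'
    filter_upwards [eventually_ge_atTop 1] with k hk
    congr 2
    omega
  have hlim2 : Tendsto (fun k : ℕ => b (k - 1) / b k) atTop (𝓝 1) := by
    have hprod : Tendsto (fun k : ℕ => (b (k - 1) - b k) * (b k)⁻¹) atTop (𝓝 0) := by
      have := he.mul hbinv
      simpa using this
    have heq : ∀ k : ℕ, 1 + (b (k - 1) - b k) * (b k)⁻¹ = b (k - 1) / b k := by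
      intro k
      have := (hbneg k).ne
      field_simp
      ring
    have h1 : Tendsto (fun k : ℕ => 1 + (b (k - 1) - b k) * (b k)⁻¹) atTop (𝓝 1) := by
      have hone : Tendsto (fun _ : ℕ => (1:ℝ)) atTop (𝓝 1) := tendsto_const_nhds
      simpa using hone.add hprod
    exact h1.congr heq
  refine ⟨hlim1, ?_, aGap_strictAnti hα0⟩
  apply hlim2.congr'
  filter_upwards [eventually_ge_atTop 1] with k hk
  have hk1 : k - 1 + 1 = k := by omega
  simp only [hbdef, hk1]
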